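/- Let Λ = Z[T]/(T⁶ - 1) act on Z/9Z by T · j̄ = 2j̄ (i.e., T acts as multiplication by 2). Let Φ : Λ → Z/9Z be the Λ-module homomorphism sending 1 to 1̄. Then the kernel M of Φ is an ideal of Λ of index 9, and M is a projective Λ-module. -/

import Mathlib

open Polynomial

/-- `Λ = ℤ[T]/(T⁶-1)`, the group ring of the cyclic group of order 6. -/
abbrev Lam6 : Type := ℤ[X] ⧸ Ideal.span {(X : ℤ[X]) ^ 6 - 1}

/-- `ℤ/9ℤ` is a `Λ`-module with `T` acting as multiplication by `2`; since `ℤ/9ℤ` is cyclic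
generated by `1̄`, the `Λ`-linear map `Φ : Λ → ℤ/9ℤ` with `Φ(1) = 1̄` is precisely the ring
homomorphism `Λ → ℤ/9ℤ`, `T ↦ 2` (so that the `Λ`-action on `ℤ/9ℤ` is via `Φ`). -/
noncomputable def Phi : Lam6 →+* ZMod 9 :=
  Ideal.Quotient.lift _ ((evalRingHom (2 : ZMod 9)).comp
      (Polynomial.mapRingHom (Int.castRingHom (ZMod 9)))) (by
    intro a ha
    rw [Ideal.mem_span_singleton] at ha
    obtain ⟨c, rfl⟩ := ha
    rw [map_mul]
    have : ((evalRingHom (2 : ZMod 9)).comp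
        (Polynomial.mapRingHom (Int.castRingHom (ZMod 9)))) ((X : ℤ[X]) ^ 6 - 1) = 0 := by
      simp only [RingHom.comp_apply, Polynomial.coe_mapRingHom, Polynomial.map_sub,
        Polynomial.map_pow, Polynomial.map_X, Polynomial.map_one, coe_evalRingHom,
        eval_sub, eval_pow, eval_X, eval_one]
      decide
    rw [this, zero_mul])

noncomputable abbrev mkL : ℤ[X] →+* Lam6 := Ideal.Quotient.mk _

noncomputable def tt : Lam6 := mkL X

noncomputable def cc : Lam6 :=
  mkL (-4 * (X^5 + 2*X^4 + 4*X^3 + 8*X^2 + 16*X + 32))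

lemma key : (tt - 2) * cc = 252 := by
  have h2 : (2 : Lam6) = mkL (2 : ℤ[X]) := (map_ofNat mkL 2).symm
  have h252 : (252 : Lam6) = mkL (252 : ℤ[X]) := (map_ofNat mkL 252).symm
  rw [tt, cc, h2, h252, ← map_sub, ← map_mul, Ideal.Quotient.eq, Ideal.mem_span_singleton]
  exact ⟨-4, by ring⟩

lemma hmonic : ((X : ℤ[X]) ^ 6 - 1).Monic := by
  have := Polynomial.monic_X_pow_sub_C (1 : ℤ) (n := 6) (by norm_num)
  simpa using this

lemma nine_reg {a : Lam6} (h : (9 : Lam6) * a = 0) : a = 0 := by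
  have : Module.IsTorsionFree ℤ Lam6 :=
    (AdjoinRoot.powerBasis' hmonic).basis.isTorsionFree
  have h9 : (9 : ℤ) • a = 0 := by
    rw [zsmul_eq_mul]; push_cast; exact h
  rcases smul_eq_zero.mp h9 with h' | h'
  · norm_num at h'
  · exact h'

lemma hreg {a b : Lam6} (h : (9:Lam6) * a = 9 * b) : a = b := by
  have h0 : (9:Lam6) * (a - b) = 0 := by linear_combination h
  exact sub_eq_zero.mp (nine_reg h0)

lemma phi_t : Phi tt = 2 := by
  rw [tt]
  show Phi (Ideal.Quotient.mk _ X) = 2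
  rw [Phi, Ideal.Quotient.lift_mk]
  simp

lemma mem_ker_rep {m : Lam6} (hm : m ∈ RingHom.ker Phi) :
    ∃ a b : Lam6, m = a * (tt - 2) + b * 9 := by
  obtain ⟨P, rfl⟩ := Ideal.Quotient.mk_surjective m
  have hPhi : Phi (Ideal.Quotient.mk _ P) = ((P.eval 2 : ℤ) : ZMod 9) := by
    rw [Phi, Ideal.Quotient.lift_mk]
    simp only [RingHom.comp_apply, coe_mapRingHom, coe_evalRingHom, eval_map]
    have h2 : (2 : ZMod 9) = (Int.castRingHom (ZMod 9)) 2 := by norm_num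
    rw [h2, eval₂_at_apply]
    simp
  rw [RingHom.mem_ker, hPhi, ZMod.intCast_zmod_eq_zero_iff_dvd] at hm
  obtain ⟨k, hk⟩ := hm
  obtain ⟨Q, hQ⟩ := Polynomial.X_sub_C_dvd_sub_C_eval (a := (2:ℤ)) (p := P)
  refine ⟨mkL Q, mkL (C k), ?_⟩
  have hP : P = Q * (X - C 2) + C k * 9 := by
    have hC : C (P.eval 2) = C k * 9 := by
      have h9 : ((9:ℕ):ℤ) = 9 := by norm_num
      rw [hk, h9, map_mul, map_ofNat]; ring
    linear_combination hQ + hC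
  rw [hP]
  simp only [map_add, map_mul, map_sub, map_ofNat, tt]

lemma ker_mul_cc {m : Lam6} (hm : m ∈ RingHom.ker Phi) :
    ∃ l : Lam6, m * cc = 9 * l := by
  obtain ⟨a, b, rfl⟩ := mem_ker_rep hm
  exact ⟨28 * a + b * cc, by linear_combination (a : Lam6) * key⟩

/-- `Φ(1) = 1̄`, `Φ` is surjective, its kernel `M = ker Φ` is an ideal of `Λ`
of index 9, and `M` is a projective `Λ`-module. -/
theorem stmt10 :
    Phi 1 = 1 ∧ Function.Surjective Phi ∧
      Nat.card (Lam6 ⧸ RingHom.ker Phi) = 9 ∧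
      Module.Projective Lam6 (RingHom.ker Phi) := by
  have hsurj : Function.Surjective Phi := by
    intro y
    refine ⟨((y.val : ℕ) : Lam6), ?_⟩
    rw [map_natCast]
    exact ZMod.natCast_rightInverse y
  refine ⟨map_one Phi, hsurj, ?_, ?_⟩
  · rw [Nat.card_congr (RingHom.quotientKerEquivOfSurjective hsurj).toEquiv, Nat.card_zmod]
  · set M := RingHom.ker Phi with hM
    have hker_t : (tt - 2 : Lam6) ∈ M := by
      rw [hM, RingHom.mem_ker, map_sub, phi_t]
      have : Phi 2 = 2 := map_ofNat Phi 2
      rw [this, sub_self]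
    have hker_9 : (9 : Lam6) ∈ M := by
      rw [hM, RingHom.mem_ker]
      have : Phi 9 = 9 := map_ofNat Phi 9
      rw [this]; decide
    let p : (Lam6 × Lam6) →ₗ[Lam6] M :=
      { toFun := fun x => ⟨x.1 * (tt - 2) + x.2 * 9,
          M.add_mem (Ideal.mul_mem_left _ _ hker_t) (Ideal.mul_mem_left _ _ hker_9)⟩
        map_add' := by intro x y; apply Subtype.ext; simp; ring
        map_smul' := by intro r x; apply Subtype.ext; simp; ring }
    let f : M → Lam6 := fun m => (ker_mul_cc m.2).choose
    have hf : ∀ m : M, (9 : Lam6) * f m = (m : Lam6) * cc := fun m =>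
      ((ker_mul_cc m.2).choose_spec).symm
    let i : M →ₗ[Lam6] (Lam6 × Lam6) :=
      { toFun := fun m => (f m, -3 * (m : Lam6))
        map_add' := by
          intro x y
          have : f (x + y) = f x + f y := by
            apply hreg
            rw [hf, mul_add, hf, hf]
            push_cast
            ring
          simp [this]
          ring
        map_smul' := by
          intro r x
          have : f (r • x) = r * f x := by
            apply hreg
            rw [hf]
            have : ((r • x : M) : Lam6) = r * (x : Lam6) := rfl
            rw [this]
            linear_combination r * (hf x).symm
          simp [this]
          try ring }
    refine Module.Projective.of_split i p ?_
    ext m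
    show f m * (tt - 2) + (-3 * (m : Lam6)) * 9 = (m : Lam6)
    apply hreg
    linear_combination (tt - 2) * hf m + (m : Lam6) * key
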